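/- Let D ⊂ ℝ^d be a bounded open set and let ε > 0. Then there is a constant C, depending only on d and the diameter of D, such that for every u ∈ L²(ℝ^d) satisfying u = 0 almost everywhere on ℝ^d ∖ D and u = 0 almost everywhere on {x ∈ D : dist(x, ∂D) < 2ε}: ∫_D u(x)² dx ≤ C ε^{−(d+2)} ∫_D ∫_{{|ξ| ≤ ε}} (u(x+ξ) − u(x))² dξ dx. -/

import Mathlib

open MeasureTheory Metric Set
open scoped ENNReal

private theorem coord_le_norm' {d : ℕ} (x : EuclideanSpace ℝ (Fin d)) (i : Fin d) :
    |x i| ≤ ‖x‖ := by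
  rw [EuclideanSpace.norm_eq]
  have h1 : |x i| = Real.sqrt (‖x i‖^2) := by
    rw [Real.sqrt_sq_eq_abs, Real.norm_eq_abs, abs_abs]
  rw [h1]
  exact Real.sqrt_le_sqrt (Finset.single_le_sum (f := fun j => ‖x j‖ ^ 2)
    (fun j _ => sq_nonneg _) (Finset.mem_univ i))

private theorem cross_frontier' {d : ℕ} {D : Set (EuclideanSpace ℝ (Fin d))} (hD : IsOpen D)
    {z w : EuclideanSpace ℝ (Fin d)} (hz : z ∈ D) (hw : w ∉ D) :
    infDist z (frontier D) ≤ dist z w := by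
  have hseg : IsPreconnected (segment ℝ z w) := (convex_segment z w).isPreconnected
  have hne : (segment ℝ z w ∩ frontier D).Nonempty := by
    by_contra hemp
    rw [Set.not_nonempty_iff_eq_empty] at hemp
    have key : ∀ c ∈ segment ℝ z w, c ∈ closure D → c ∈ D := by
      intro c hc hcD
      by_contra h2
      have : c ∈ segment ℝ z w ∩ frontier D := ⟨hc, by rw [hD.frontier_eq]; exact ⟨hcD, h2⟩⟩
      simp [hemp] at this
    have hsub : segment ℝ z w ⊆ D ∪ (closure D)ᶜ := by
      intro c hc
      by_cases hcD : c ∈ closure D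
      · exact Or.inl (key c hc hcD)
      · exact Or.inr hcD
    obtain ⟨c, -, hc1, hc2⟩ := hseg D (closure D)ᶜ hD isClosed_closure.isOpen_compl hsub
      ⟨z, left_mem_segment ℝ z w, hz⟩
      ⟨w, right_mem_segment ℝ z w, fun hwc => hw (key w (right_mem_segment ℝ z w) hwc)⟩
    exact hc2 (subset_closure hc1)
  obtain ⟨y, hyseg, hyf⟩ := hne
  calc infDist z (frontier D) ≤ dist z y := infDist_le_dist_of_mem hyf
    _ ≤ dist z w := by
      have := dist_add_dist_of_mem_segment hyseg
      nlinarith [dist_nonneg (x := y) (y := w)]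

set_option maxHeartbeats 2000000 in
theorem stmt_8 (d : ℕ) (hd : 1 ≤ d) (R : ℝ) (hR : 0 < R) :
    ∃ C : ℝ, 0 < C ∧
      ∀ D : Set (EuclideanSpace ℝ (Fin d)), IsOpen D → Bornology.IsBounded D →
        Metric.diam D ≤ R →
        ∀ ε : ℝ, 0 < ε →
          ∀ u : EuclideanSpace ℝ (Fin d) → ℝ, MemLp u 2 (volume : Measure (EuclideanSpace ℝ (Fin d))) →
            (∀ᵐ x : EuclideanSpace ℝ (Fin d), x ∉ D → u x = 0) →
            (∀ᵐ x : EuclideanSpace ℝ (Fin d), x ∈ D → infDist x (frontier D) < 2 * ε → u x = 0) →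
            (∫⁻ x in D, ENNReal.ofReal ((u x) ^ 2)) ≤
              ENNReal.ofReal (C / ε ^ (d + 2)) *
                ∫⁻ x in D, ∫⁻ ξ in closedBall (0 : EuclideanSpace ℝ (Fin d)) ε,
                  ENNReal.ofReal ((u (x + ξ) - u x) ^ 2) := by
  haveI : Nonempty (Fin d) := ⟨⟨0, hd⟩⟩
  set E := EuclideanSpace ℝ (Fin d)
  set μ : Measure E := volume with hμ
  set B : ℝ≥0∞ := μ (ball (0 : E) 1) with hB
  have hBpos : 0 < B := measure_ball_pos μ 0 one_pos
  have hBfin : B ≠ ∞ := measure_ball_lt_top.ne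
  set cB : ℝ := B.toReal with hcB
  have hcBpos : 0 < cB := ENNReal.toReal_pos hBpos.ne' hBfin
  have hBeq : B = ENNReal.ofReal cB := (ENNReal.ofReal_toReal hBfin).symm
  refine ⟨9 * R ^ 2 * 8 ^ d / cB, by positivity, ?_⟩
  intro D hDo hDb hdiam ε hε u hu h0 hcol
  set i₀ : Fin d := ⟨0, hd⟩
  have hDm : MeasurableSet D := hDo.measurableSet
  by_cases hcase : 2 * ε ≤ R
  · -- main case
    -- MAIN CASE: 2ε ≤ R
    have hεne : ε ≠ 0 := hε.ne'
    set Hs : Set (EuclideanSpace ℝ (Fin d)) :=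
      closedBall (0 : EuclideanSpace ℝ (Fin d)) ε ∩ {h | ε/2 ≤ h i₀} with hHsdef
    have hHm : MeasurableSet Hs :=
      measurableSet_closedBall.inter
        (isClosed_le continuous_const ((EuclideanSpace.proj i₀).continuous)).measurableSet
    have hHfin : μ Hs ≠ ∞ :=
      ((measure_mono inter_subset_left).trans_lt measure_closedBall_lt_top).ne
    set K : ℕ := ⌈2*R/ε⌉₊ + 1 with hKdef
    have hKlb : 2*R/ε + 1 ≤ (K:ℝ) := by
      have := Nat.le_ceil (2*R/ε)
      push_cast [hKdef]
      linarith
    have hKub : (K:ℝ) ≤ 3*R/ε := by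
      have h1 : (⌈2*R/ε⌉₊ : ℝ) < 2*R/ε + 1 :=
        Nat.ceil_lt_add_one (by positivity)
      have h2 : 2 ≤ R/ε := by rw [le_div_iff₀ hε]; linarith
      have e1 : 2*R/ε = 2*(R/ε) := by ring
      have e2 : 3*R/ε = 3*(R/ε) := by ring
      push_cast [hKdef]
      rw [e1, e2]
      rw [e1] at h1
      linarith
    have hKne : ((K:ℝ)) ≠ 0 := by positivity
    -- measurable representative
    have hmeas := hu.aestronglyMeasurable
    set v : EuclideanSpace ℝ (Fin d) → ℝ := hmeas.mk u with hvdef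
    have hvm : Measurable v := hmeas.stronglyMeasurable_mk.measurable
    have huv : u =ᵐ[μ] v := hmeas.ae_eq_mk
    -- good/bad sets
    set P : EuclideanSpace ℝ (Fin d) → Prop :=
      fun x => (x ∉ D → v x = 0) ∧ (x ∈ D → infDist x (frontier D) < 2*ε → v x = 0) with hPdef
    have hP : ∀ᵐ x ∂μ, P x := by
      filter_upwards [h0, hcol, huv] with x h1 h2 h3
      exact ⟨fun hx => h3 ▸ h1 hx, fun hx hx2 => h3 ▸ h2 hx hx2⟩
    set S : Set (EuclideanSpace ℝ (Fin d)) := toMeasurable μ {x | ¬ P x} with hSdef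
    have hSm : MeasurableSet S := measurableSet_toMeasurable μ _
    have hS0 : μ S = 0 := by
      rw [hSdef, measure_toMeasurable]
      exact hP
    have hSP : ∀ x, x ∉ S → P x := by
      intro x hx
      by_contra h
      exact hx (subset_toMeasurable μ _ h)
    -- geometric escape
    have hKgeo : ∀ x ∈ D, ∀ h ∈ Hs, x + (K:ℝ) • h ∉ D := by
      intro x hx h hh hmem
      have h1 : dist x (x + (K:ℝ)•h) ≤ R := (dist_le_diam_of_mem hDb hx hmem).trans hdiam
      have h2 : dist x (x + (K:ℝ)•h) = ‖(K:ℝ)•h‖ := dist_self_add_right _ x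
      have h3 : ((K:ℝ)•h) i₀ = (K:ℝ) * h i₀ := rfl
      have h4 : |((K:ℝ)•h) i₀| ≤ ‖(K:ℝ)•h‖ := coord_le_norm' _ _
      have h5 : ε/2 ≤ h i₀ := hh.2
      have h6 : (K:ℝ) * (ε/2) ≤ (K:ℝ) * h i₀ :=
        mul_le_mul_of_nonneg_left h5 (by positivity)
      have h7 : (2*R/ε + 1) * (ε/2) ≤ (K:ℝ) * (ε/2) :=
        mul_le_mul_of_nonneg_right hKlb (by positivity)
      have h8 : (2*R/ε + 1) * (ε/2) = R + ε/2 := by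
        field_simp
      have h9 : (K:ℝ) * h i₀ ≤ |((K:ℝ)•h) i₀| := by rw [h3]; exact le_abs_self _
      linarith
    -- pointwise chain inequality
    have hchain : ∀ x h, x ∈ D → h ∈ Hs → (x + (K:ℝ)•h) ∉ S →
        ENNReal.ofReal (v x ^ 2) ≤ (K:ℝ≥0∞) * ∑ j ∈ Finset.range K,
          ENNReal.ofReal ((v (x + (((j+1):ℕ):ℝ)•h) - v (x + ((j:ℕ):ℝ)•h))^2) := by
      intro x h hx hh hxS
      have hv0 : v (x + (K:ℝ)•h) = 0 := (hSP _ hxS).1 (hKgeo x hx h hh)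
      set f : ℕ → ℝ := fun j => v (x + ((j:ℕ):ℝ)•h) with hfdef
      have htel : ∑ j ∈ Finset.range K, (f (j+1) - f j) = f K - f 0 := Finset.sum_range_sub f K
      have hf0 : f 0 = v x := by simp [hfdef]
      have hfK : f K = 0 := hv0
      have h1 : v x ^ 2 = (∑ j ∈ Finset.range K, (f (j+1) - f j))^2 := by
        rw [htel, hfK, hf0]
        ring
      have h2 : (∑ j ∈ Finset.range K, (f (j+1) - f j))^2 ≤
          (K:ℝ) * ∑ j ∈ Finset.range K, (f (j+1) - f j)^2 := by
        have := sq_sum_le_card_mul_sum_sq (s := Finset.range K) (f := fun j => f (j+1) - f j)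
        simpa [Finset.card_range] using this
      calc ENNReal.ofReal (v x ^ 2)
          ≤ ENNReal.ofReal ((K:ℝ) * ∑ j ∈ Finset.range K, (f (j+1) - f j)^2) :=
            ENNReal.ofReal_le_ofReal (h1 ▸ h2)
        _ = (K:ℝ≥0∞) * ∑ j ∈ Finset.range K, ENNReal.ofReal ((f (j+1) - f j)^2) := by
            rw [ENNReal.ofReal_mul (by positivity), ENNReal.ofReal_natCast,
              ENNReal.ofReal_sum_of_nonneg (fun j _ => sq_nonneg _)]
        _ = _ := rfl
    -- measurability helpers
    set g : ℕ → EuclideanSpace ℝ (Fin d) × EuclideanSpace ℝ (Fin d) → ℝ≥0∞ :=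
      fun j p => ENNReal.ofReal ((v (p.1 + (((j+1):ℕ):ℝ)•p.2) - v (p.1 + ((j:ℕ):ℝ)•p.2))^2)
      with hgdef
    have hgm : ∀ j, Measurable (g j) := by
      intro j
      apply ENNReal.measurable_ofReal.comp
      fun_prop
    set F : EuclideanSpace ℝ (Fin d) → EuclideanSpace ℝ (Fin d) → ℝ≥0∞ :=
      fun y h => ENNReal.ofReal ((v (y + h) - v y)^2) with hFdef
    have hFm : Measurable (fun p : EuclideanSpace ℝ (Fin d) × EuclideanSpace ℝ (Fin d) => F p.1 p.2) := by
      apply ENNReal.measurable_ofReal.comp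
      fun_prop
    set ρ := (μ.restrict D).prod (μ.restrict Hs) with hρdef
    have hρ : ρ = (μ.prod μ).restrict (D ×ˢ Hs) := Measure.prod_restrict D Hs
    have hmemρ : ∀ᵐ p ∂ρ, p.1 ∈ D ∧ p.2 ∈ Hs := by
      rw [hρ]
      filter_upwards [ae_restrict_mem (hDm.prod hHm)] with p hp
      exact ⟨hp.1, hp.2⟩
    have hSρ : ∀ᵐ p ∂ρ, p.1 + (K:ℝ)•p.2 ∉ S := by
      rw [hρ]
      refine ae_restrict_of_ae ?_
      have hmm : Measurable (fun p : EuclideanSpace ℝ (Fin d) × EuclideanSpace ℝ (Fin d) =>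
          p.1 + (K:ℝ) • p.2) := by fun_prop
      have hTm : MeasurableSet {p : EuclideanSpace ℝ (Fin d) × EuclideanSpace ℝ (Fin d) |
          p.1 + (K:ℝ)•p.2 ∈ S} := hmm hSm
      rw [ae_iff]
      have heq : {p : EuclideanSpace ℝ (Fin d) × EuclideanSpace ℝ (Fin d) |
            ¬ p.1 + (K:ℝ)•p.2 ∉ S}
          = {p : EuclideanSpace ℝ (Fin d) × EuclideanSpace ℝ (Fin d) | p.1 + (K:ℝ)•p.2 ∈ S} := by
        ext p; simp
      rw [heq, Measure.prod_apply hTm]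
      have hz : ∀ x : EuclideanSpace ℝ (Fin d),
          μ (Prod.mk x ⁻¹' {p : EuclideanSpace ℝ (Fin d) × EuclideanSpace ℝ (Fin d) |
            p.1 + (K:ℝ)•p.2 ∈ S}) = 0 := by
        intro x
        have he : (Prod.mk x ⁻¹' {p : EuclideanSpace ℝ (Fin d) × EuclideanSpace ℝ (Fin d) |
            p.1 + (K:ℝ)•p.2 ∈ S}) = ((K:ℝ) • ·) ⁻¹' ((x + ·) ⁻¹' S) := rfl
        rw [he, Measure.addHaar_preimage_smul μ hKne, measure_preimage_add]
        simp [hS0]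
      simp only [hz]
      simp
    have hptρ : ∀ᵐ p ∂ρ, ENNReal.ofReal (v p.1 ^2) ≤
        (K:ℝ≥0∞) * ∑ j ∈ Finset.range K, g j p := by
      filter_upwards [hmemρ, hSρ] with p hp hps
      exact hchain p.1 p.2 hp.1 hp.2 hps
    have hIA : (∫⁻ x in D, ENNReal.ofReal (v x ^2) ∂μ) * μ Hs
        = ∫⁻ p, ENNReal.ofReal (v p.1 ^ 2) ∂ρ := by
      rw [hρdef]
      calc (∫⁻ x in D, ENNReal.ofReal (v x ^2) ∂μ) * μ Hs
          = ∫⁻ x, ENNReal.ofReal (v x^2) * μ Hs ∂μ.restrict D :=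
            (lintegral_mul_const' _ _ hHfin).symm
        _ = ∫⁻ x, (∫⁻ _h, ENNReal.ofReal (v x^2) ∂μ.restrict Hs) ∂μ.restrict D :=
            lintegral_congr fun x => by rw [lintegral_const, Measure.restrict_apply_univ]
        _ = ∫⁻ p, ENNReal.ofReal (v p.1 ^ 2) ∂(μ.restrict D).prod (μ.restrict Hs) :=
            (lintegral_prod _ ((ENNReal.measurable_ofReal.comp
              ((hvm.comp measurable_fst).pow_const 2)).aemeasurable)).symm
    have hIB : ∫⁻ p, ENNReal.ofReal (v p.1 ^2) ∂ρ ≤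
        (K:ℝ≥0∞) * ∑ j ∈ Finset.range K, ∫⁻ p, g j p ∂ρ := by
      calc ∫⁻ p, ENNReal.ofReal (v p.1^2) ∂ρ
          ≤ ∫⁻ p, ((K:ℝ≥0∞) * ∑ j ∈ Finset.range K, g j p) ∂ρ := lintegral_mono_ae hptρ
        _ = (K:ℝ≥0∞) * ∫⁻ p, (∑ j ∈ Finset.range K, g j p) ∂ρ :=
            lintegral_const_mul _ (Finset.measurable_sum _ (fun j _ => hgm j))
        _ = (K:ℝ≥0∞) * ∑ j ∈ Finset.range K, ∫⁻ p, g j p ∂ρ := by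
            rw [lintegral_finset_sum _ (fun j _ => hgm j)]
    set W : ℝ≥0∞ := (∫⁻ h, (∫⁻ y, F y h ∂μ) ∂μ.restrict Hs) with hWdef
    have hID : ∀ j, (∫⁻ p, g j p ∂ρ) ≤ W := by
      intro j
      rw [hρdef, lintegral_prod_symm _ (hgm j).aemeasurable]
      refine lintegral_mono fun h => ?_
      calc ∫⁻ x, g j (x, h) ∂μ.restrict D
          ≤ ∫⁻ x, g j (x, h) ∂μ := setLIntegral_le_lintegral _ _
        _ = ∫⁻ y, F y h ∂μ := by
            have he : ∀ x : EuclideanSpace ℝ (Fin d),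
                g j (x, h) = F (x + ((j:ℕ):ℝ)•h) h := by
              intro x
              simp only [hgdef, hFdef]
              have : x + (((j+1):ℕ):ℝ)•h = (x + ((j:ℕ):ℝ)•h) + h := by
                push_cast
                rw [add_smul, one_smul]
                abel
              rw [this]
            rw [lintegral_congr he]
            exact lintegral_add_right_eq_self (fun y => F y h) _
    have hcomb : (∫⁻ x in D, ENNReal.ofReal (v x^2) ∂μ) * μ Hs ≤ (K:ℝ≥0∞)^2 * W := by
      rw [hIA]
      refine hIB.trans ?_
      calc (K:ℝ≥0∞) * ∑ j ∈ Finset.range K, ∫⁻ p, g j p ∂ρ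
          ≤ (K:ℝ≥0∞) * ∑ _j ∈ Finset.range K, W := by
            gcongr with j hj
            exact hID j
        _ = (K:ℝ≥0∞) * ((K:ℝ≥0∞) * W) := by
            rw [Finset.sum_const, Finset.card_range, nsmul_eq_mul]
        _ = (K:ℝ≥0∞)^2 * W := by rw [← mul_assoc, sq]
    -- Step E: restrict inner integral to D
    have hA : ∀ᵐ p ∂((μ.restrict Hs).prod μ), p.2 ∉ S := by
      rw [ae_iff]
      have heq : {p : EuclideanSpace ℝ (Fin d) × EuclideanSpace ℝ (Fin d) | ¬ p.2 ∉ S}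
          = (univ : Set (EuclideanSpace ℝ (Fin d))) ×ˢ S := by
        ext p; simp
      rw [heq, Measure.prod_prod, hS0, mul_zero]
    have hB2 : ∀ᵐ p ∂((μ.restrict Hs).prod μ), p.2 + p.1 ∉ S := by
      rw [ae_iff]
      have hmm : Measurable fun p : EuclideanSpace ℝ (Fin d) × EuclideanSpace ℝ (Fin d) =>
          p.2 + p.1 := measurable_snd.add measurable_fst
      have hTm : MeasurableSet {p : EuclideanSpace ℝ (Fin d) × EuclideanSpace ℝ (Fin d) |
          p.2 + p.1 ∈ S} := hmm hSm
      have heq : {p : EuclideanSpace ℝ (Fin d) × EuclideanSpace ℝ (Fin d) | ¬ p.2 + p.1 ∉ S}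
          = {p : EuclideanSpace ℝ (Fin d) × EuclideanSpace ℝ (Fin d) | p.2 + p.1 ∈ S} := by
        ext p; simp
      rw [heq, Measure.prod_apply hTm]
      have hz : ∀ h : EuclideanSpace ℝ (Fin d),
          μ (Prod.mk h ⁻¹' {p : EuclideanSpace ℝ (Fin d) × EuclideanSpace ℝ (Fin d) |
            p.2 + p.1 ∈ S}) = 0 := by
        intro h
        have he : Prod.mk h ⁻¹' {p : EuclideanSpace ℝ (Fin d) × EuclideanSpace ℝ (Fin d) |
            p.2 + p.1 ∈ S} = (h + ·) ⁻¹' S := by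
          ext y; simp [add_comm]
        rw [he, measure_preimage_add]
        exact hS0
      simp only [hz]
      simp
    have hae_h : ∀ᵐ h ∂(μ.restrict Hs), ∀ᵐ y ∂μ, y ∉ S ∧ y + h ∉ S := by
      have := Measure.ae_ae_of_ae_prod (hA.and hB2)
      filter_upwards [this] with h hh
      filter_upwards [hh] with y hy
      exact hy
    have hWeq : W = ∫⁻ h, (∫⁻ y, F y h ∂μ.restrict D) ∂μ.restrict Hs := by
      refine lintegral_congr_ae ?_
      filter_upwards [hae_h, ae_restrict_mem hHm] with h hhae hhH
      have hnormh : ‖h‖ ≤ ε := by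
        have := hhH.1
        rwa [mem_closedBall, dist_zero_right] at this
      have hcompl : (∫⁻ y, F y h ∂μ.restrict Dᶜ) = 0 := by
        rw [← lintegral_zero (μ := μ.restrict Dᶜ)]
        refine lintegral_congr_ae ?_
        filter_upwards [ae_restrict_of_ae hhae, ae_restrict_mem hDm.compl] with y hy hyD
        have hvy : v y = 0 := (hSP y hy.1).1 hyD
        have hvyh : v (y + h) = 0 := by
          by_cases hmem : y + h ∈ D
          · refine (hSP _ hy.2).2 hmem ?_
            have hle : infDist (y+h) (frontier D) ≤ dist (y+h) y := cross_frontier' hDo hmem hyD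
            have hd2 : dist (y+h) y = ‖h‖ := by rw [dist_eq_norm, add_sub_cancel_left]
            linarith
          · exact (hSP _ hy.2).1 hmem
        simp [hFdef, hvy, hvyh]
      calc (∫⁻ y, F y h ∂μ)
          = (∫⁻ y, F y h ∂μ.restrict D) + (∫⁻ y, F y h ∂μ.restrict Dᶜ) :=
            (lintegral_add_compl _ hDm).symm
        _ = ∫⁻ y, F y h ∂μ.restrict D := by rw [hcompl, add_zero]
    have hWle : W ≤ ∫⁻ h, (∫⁻ y, F y h ∂μ.restrict D)
        ∂μ.restrict (closedBall (0 : EuclideanSpace ℝ (Fin d)) ε) := by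
      rw [hWeq]
      exact lintegral_mono' (Measure.restrict_mono inter_subset_left le_rfl) le_rfl
    have hswap : (∫⁻ h, (∫⁻ y, F y h ∂μ.restrict D)
          ∂μ.restrict (closedBall (0 : EuclideanSpace ℝ (Fin d)) ε))
        = ∫⁻ y, (∫⁻ h, F y h
            ∂μ.restrict (closedBall (0 : EuclideanSpace ℝ (Fin d)) ε)) ∂μ.restrict D := by
      rw [← lintegral_prod_symm _ hFm.aemeasurable, lintegral_prod _ hFm.aemeasurable]
    -- switch from v back to u
    set S2 : Set (EuclideanSpace ℝ (Fin d)) := toMeasurable μ {x | u x ≠ v x} with hS2def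
    have hS2m : MeasurableSet S2 := measurableSet_toMeasurable μ _
    have hS20 : μ S2 = 0 := by
      rw [hS2def, measure_toMeasurable]
      exact huv
    have hprod2 : ∀ᵐ y ∂μ, ∀ᵐ h ∂μ, y + h ∉ S2 := by
      have hp : ∀ᵐ p ∂(μ.prod μ), p.1 + p.2 ∉ S2 := by
        rw [ae_iff]
        have hmm : Measurable fun p : EuclideanSpace ℝ (Fin d) × EuclideanSpace ℝ (Fin d) =>
          p.1 + p.2 := measurable_fst.add measurable_snd
        have hTm : MeasurableSet {p : EuclideanSpace ℝ (Fin d) × EuclideanSpace ℝ (Fin d) |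
            p.1 + p.2 ∈ S2} := hmm hS2m
        have heq : {p : EuclideanSpace ℝ (Fin d) × EuclideanSpace ℝ (Fin d) | ¬ p.1 + p.2 ∉ S2}
            = {p : EuclideanSpace ℝ (Fin d) × EuclideanSpace ℝ (Fin d) | p.1 + p.2 ∈ S2} := by
          ext p; simp
        rw [heq, Measure.prod_apply hTm]
        have hz : ∀ y : EuclideanSpace ℝ (Fin d),
            μ (Prod.mk y ⁻¹' {p : EuclideanSpace ℝ (Fin d) × EuclideanSpace ℝ (Fin d) |
              p.1 + p.2 ∈ S2}) = 0 := by
          intro y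
          have he : Prod.mk y ⁻¹' {p : EuclideanSpace ℝ (Fin d) × EuclideanSpace ℝ (Fin d) |
              p.1 + p.2 ∈ S2} = (y + ·) ⁻¹' S2 := rfl
          rw [he, measure_preimage_add]
          exact hS20
        simp only [hz]
        simp
      have := Measure.ae_ae_of_ae_prod hp
      filter_upwards [this] with y hy
      filter_upwards [hy] with h hh
      exact hh
    have hfinal_eqR : (∫⁻ y, (∫⁻ h, F y h
          ∂μ.restrict (closedBall (0 : EuclideanSpace ℝ (Fin d)) ε)) ∂μ.restrict D)
        = ∫⁻ x, (∫⁻ ξ, ENNReal.ofReal ((u (x+ξ) - u x)^2)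
            ∂μ.restrict (closedBall (0 : EuclideanSpace ℝ (Fin d)) ε)) ∂μ.restrict D := by
      refine lintegral_congr_ae ?_
      filter_upwards [ae_restrict_of_ae hprod2, ae_restrict_of_ae huv] with y hy hyuv
      refine lintegral_congr_ae ?_
      filter_upwards [ae_restrict_of_ae hy] with h hh
      have huvh : u (y + h) = v (y + h) := by
        by_contra hne
        exact hh (subset_toMeasurable μ _ hne)
      show F y h = ENNReal.ofReal ((u (y+h) - u y)^2)
      rw [huvh, hyuv]
    have hLHSeq : (∫⁻ x in D, ENNReal.ofReal ((u x)^2) ∂μ)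
        = ∫⁻ x in D, ENNReal.ofReal (v x^2) ∂μ := by
      refine lintegral_congr_ae ?_
      filter_upwards [ae_restrict_of_ae huv] with x hx
      rw [hx]
    -- lower bound on μ Hs
    have hball : ball (EuclideanSpace.single i₀ (3*ε/4)) (ε/8) ⊆ Hs := by
      intro h hmem
      rw [mem_ball] at hmem
      have hnorm : ‖h - EuclideanSpace.single i₀ (3*ε/4)‖ < ε/8 := by
        rwa [← dist_eq_norm]
      have hns : ‖EuclideanSpace.single i₀ (3*ε/4)‖ = 3*ε/4 := by
        rw [EuclideanSpace.norm_single, Real.norm_eq_abs, abs_of_pos (by positivity)]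
      constructor
      · rw [mem_closedBall, dist_zero_right]
        have h1 : ‖h‖ ≤ ‖h - EuclideanSpace.single i₀ (3*ε/4)‖
            + ‖EuclideanSpace.single i₀ (3*ε/4)‖ := by
          have := norm_add_le (h - EuclideanSpace.single i₀ (3*ε/4))
            (EuclideanSpace.single i₀ (3*ε/4))
          rwa [sub_add_cancel] at this
        rw [hns] at h1
        linarith
      · show ε/2 ≤ h i₀
        have hcoord : |(h - EuclideanSpace.single i₀ (3*ε/4)) i₀|
            ≤ ‖h - EuclideanSpace.single i₀ (3*ε/4)‖ := coord_le_norm' _ _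
        have hc2 : (h - EuclideanSpace.single i₀ (3*ε/4)) i₀ = h i₀ - 3*ε/4 := by
          simp [EuclideanSpace.single_apply]
        rw [hc2] at hcoord
        have := abs_lt.1 (lt_of_le_of_lt hcoord hnorm)
        linarith [this.1]
    have hHslb : ENNReal.ofReal ((ε/8)^d * cB) ≤ μ Hs := by
      calc ENNReal.ofReal ((ε/8)^d * cB)
          = ENNReal.ofReal ((ε/8)^d) * B := by
            rw [ENNReal.ofReal_mul (by positivity), ← hBeq]
        _ = μ (ball (EuclideanSpace.single i₀ (3*ε/4)) (ε/8)) := by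
            rw [Measure.addHaar_ball μ _ (by positivity : (0:ℝ) ≤ ε/8),
              finrank_euclideanSpace_fin]
        _ ≤ μ Hs := measure_mono hball
    have hHpos : μ Hs ≠ 0 :=
      (lt_of_lt_of_le (ENNReal.ofReal_pos.2 (by positivity)) hHslb).ne'
    -- final assembly
    set Ju : ℝ≥0∞ := ∫⁻ x, (∫⁻ ξ, ENNReal.ofReal ((u (x+ξ) - u x)^2)
        ∂μ.restrict (closedBall (0 : EuclideanSpace ℝ (Fin d)) ε)) ∂μ.restrict D with hJudef
    have hWJu : W ≤ Ju := hWle.trans (le_of_eq (hswap.trans hfinal_eqR))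
    have h1 : (∫⁻ x in D, ENNReal.ofReal (v x^2) ∂μ) * μ Hs ≤ (K:ℝ≥0∞)^2 * Ju :=
      hcomb.trans (mul_le_mul_right hWJu _)
    have h2 : (∫⁻ x in D, ENNReal.ofReal (v x^2) ∂μ) ≤ ((K:ℝ≥0∞)^2 * Ju) / μ Hs :=
      (ENNReal.le_div_iff_mul_le (Or.inl hHpos) (Or.inl hHfin)).2 h1
    have h3 : ((K:ℝ≥0∞)^2 * Ju) / μ Hs = ((K:ℝ≥0∞)^2 / μ Hs) * Ju := by
      rw [div_eq_mul_inv, div_eq_mul_inv, mul_right_comm]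
    have hnum : (K:ℝ≥0∞)^2 ≤ ENNReal.ofReal ((3*R/ε)^2) := by
      rw [← ENNReal.ofReal_natCast K, ← ENNReal.ofReal_pow (by positivity)]
      exact ENNReal.ofReal_le_ofReal (pow_le_pow_left₀ (by positivity) hKub 2)
    have h4 : (K:ℝ≥0∞)^2 / μ Hs ≤ ENNReal.ofReal ((9 * R ^ 2 * 8 ^ d / cB) / ε^(d+2)) := by
      calc (K:ℝ≥0∞)^2 / μ Hs
          ≤ ENNReal.ofReal ((3*R/ε)^2) / ENNReal.ofReal ((ε/8)^d * cB) :=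
            ENNReal.div_le_div hnum hHslb
        _ = ENNReal.ofReal ((3*R/ε)^2 / ((ε/8)^d * cB)) :=
            (ENNReal.ofReal_div_of_pos (by positivity)).symm
        _ = ENNReal.ofReal ((9 * R ^ 2 * 8 ^ d / cB) / ε^(d+2)) := by
            congr 1
            rw [div_pow, div_pow]
            field_simp
            ring
    rw [hLHSeq]
    refine h2.trans ?_
    rw [h3]
    exact mul_le_mul_left h4 _



  · -- ε large: u vanishes a.e. on D
    push_neg at hcase
    have hae : ∀ᵐ x ∂μ, x ∈ D → u x = 0 := by
      filter_upwards [hcol] with x hx hxD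
      refine hx hxD ?_
      have hDne : D.Nonempty := ⟨x, hxD⟩
      have hDnu : D ≠ univ := by
        intro h
        exact absurd (h ▸ hDb) (NormedSpace.unbounded_univ ℝ E)
      obtain ⟨y, hy⟩ := nonempty_frontier_iff.2 ⟨hDne, hDnu⟩
      have hyD : y ∈ closure D := hy.1
      have : dist x y ≤ diam D := by
        rw [← Metric.diam_closure]
        exact dist_le_diam_of_mem hDb.closure (subset_closure hxD) hyD
      calc infDist x (frontier D) ≤ dist x y := infDist_le_dist_of_mem hy
        _ ≤ R := this.trans hdiam
        _ < 2 * ε := hcase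
    have : (∫⁻ x in D, ENNReal.ofReal ((u x) ^ 2) ∂μ) = 0 := by
      rw [← lintegral_zero (μ := μ.restrict D)]
      refine lintegral_congr_ae ?_
      filter_upwards [ae_restrict_of_ae hae, ae_restrict_mem hDm] with x hx hxD
      rw [hx hxD]; simp
    rw [this]
    exact zero_le
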